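/- For every δ > 0 and m > 0, there exists a differentiable function f : ℝ → ℝ such that |f(x)| ≤ δ for all x ∈ ℝ, f' is Lipschitz continuous with Lipschitz constant m, and f'(0) = √(2 δ m). -/

import Mathlib

open MeasureTheory intervalIntegral Metric

section Aux

variable (δ m : ℝ)

/-- the half-period -/
noncomputable def efHalf : ℝ := Real.sqrt (2 * δ / m)

/-- the lattice of period points -/
def efLattice (h : ℝ) : Set ℝ := Set.range fun k : ℤ => 4 * h * k

/-- the triangle-wave distance function -/
noncomputable def efD (h : ℝ) (x : ℝ) : ℝ := Metric.infDist x (efLattice h)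

lemma efLattice_nonempty (h : ℝ) : (efLattice h).Nonempty :=
  ⟨0, ⟨0, by simp⟩⟩

lemma efD_lipschitz (h : ℝ) : LipschitzWith 1 (efD h) :=
  Metric.lipschitz_infDist_pt _

lemma efD_nonneg (h x : ℝ) : 0 ≤ efD h x := Metric.infDist_nonneg

lemma efD_eq_abs (h : ℝ) (hh : 0 < h) {t : ℝ} (ht : |t| ≤ 2 * h) :
    efD h t = |t| := by
  refine le_antisymm ?_ ?_
  · have h0 : (0 : ℝ) ∈ efLattice h := ⟨0, by simp⟩
    simpa [efD, Real.dist_eq] using Metric.infDist_le_dist_of_mem (x := t) h0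
  · by_contra hlt
    push_neg at hlt
    obtain ⟨y, hy, hdy⟩ := (Metric.infDist_lt_iff (efLattice_nonempty h)).mp hlt
    obtain ⟨k, rfl⟩ := hy
    rw [Real.dist_eq] at hdy
    have hdy' : |t - 4 * h * (k : ℝ)| < |t| := hdy
    clear hdy
    rcases eq_or_ne k 0 with rfl | hk
    · simp only [Int.cast_zero, mul_zero, sub_zero] at hdy'
      exact absurd hdy' (lt_irrefl _)
    · have hk1 : (1 : ℝ) ≤ |(k : ℝ)| := by
        have := Int.one_le_abs (by exact_mod_cast hk : k ≠ 0)
        calc (1:ℝ) ≤ |k| := by exact_mod_cast this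
        _ = |(k:ℝ)| := by push_cast [Int.cast_abs]; ring
      have habs : |4 * h * (k : ℝ)| = 4 * h * |(k : ℝ)| := by
        rw [abs_mul, abs_of_nonneg (by positivity : (0:ℝ) ≤ 4 * h)]
      have : 4 * h * |(k : ℝ)| - |t| ≤ |t - 4 * h * k| := by
        have := abs_sub_abs_le_abs_sub (4 * h * (k : ℝ)) t
        rw [habs] at this
        calc 4 * h * |(k:ℝ)| - |t| ≤ |4 * h * k - t| := this
          _ = |t - 4 * h * k| := abs_sub_comm _ _
      nlinarith [abs_nonneg t, hdy']

lemma efD_zero (h : ℝ) : efD h 0 = 0 :=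
  Metric.infDist_zero_of_mem ⟨0, by simp⟩

lemma efD_periodic (h : ℝ) : Function.Periodic (efD h) (4 * h) := by
  have key : ∀ x : ℝ, efD h (x + 4 * h) ≤ efD h x := by
    intro x
    by_contra hlt
    push_neg at hlt
    obtain ⟨y, hy, hdy⟩ := (Metric.infDist_lt_iff (efLattice_nonempty h)).mp
      (lt_of_le_of_lt le_rfl hlt)
    obtain ⟨k, rfl⟩ := hy
    have hmem : (4 * h * ((k : ℝ) + 1)) ∈ efLattice h := ⟨k + 1, by push_cast; ring⟩
    have := Metric.infDist_le_dist_of_mem (x := x + 4 * h) hmem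
    rw [Real.dist_eq] at this hdy
    have heq : |x + 4 * h - 4 * h * ((k : ℝ) + 1)| = |x - 4 * h * k| := by
      ring_nf
    rw [heq] at this
    unfold efD at *
    linarith
  have key2 : ∀ x : ℝ, efD h x ≤ efD h (x + 4 * h) := by
    intro x
    by_contra hlt
    push_neg at hlt
    obtain ⟨y, hy, hdy⟩ := (Metric.infDist_lt_iff (efLattice_nonempty h)).mp hlt
    obtain ⟨k, rfl⟩ := hy
    have hmem : (4 * h * ((k : ℝ) - 1)) ∈ efLattice h := ⟨k - 1, by push_cast; ring⟩
    have := Metric.infDist_le_dist_of_mem (x := x) hmem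
    rw [Real.dist_eq] at this hdy
    have heq : |x - 4 * h * ((k : ℝ) - 1)| = |x + 4 * h - 4 * h * k| := by
      ring_nf
    rw [heq] at this
    unfold efD at *
    linarith
  intro x
  exact le_antisymm (key x) (key2 x)

/-- the derivative function -/
noncomputable def efG (m h : ℝ) (x : ℝ) : ℝ := m * (h - efD h x)

lemma efG_continuous (m h : ℝ) : Continuous (efG m h) := by
  have : Continuous (efD h) := (efD_lipschitz h).continuous
  exact continuous_const.mul (continuous_const.sub this)

/-- the extremal function -/
noncomputable def efF (m h : ℝ) (x : ℝ) : ℝ := ∫ t in (0:ℝ)..x, efG m h t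

lemma efF_hasDerivAt (m h : ℝ) (x : ℝ) : HasDerivAt (efF m h) (efG m h x) x := by
  apply intervalIntegral.integral_hasDerivAt_right
  · exact (efG_continuous m h).intervalIntegrable _ _
  · exact (efG_continuous m h).stronglyMeasurableAtFilter _ _
  · exact (efG_continuous m h).continuousAt

end Aux

/-- existence of an extremal function: `|f| ≤ δ` everywhere,
`f'` is Lipschitz with constant `m`, and `f'(0) = √(2δm)`. -/
theorem extremal_function_exists
    (δ m : ℝ) (hδ : 0 < δ) (hm : 0 < m) :
    ∃ f : ℝ → ℝ, Differentiable ℝ f ∧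
      (∀ x : ℝ, |f x| ≤ δ) ∧
      (∀ s t : ℝ, |deriv f s - deriv f t| ≤ m * |s - t|) ∧
      deriv f 0 = Real.sqrt (2 * δ * m) := by
  set h : ℝ := Real.sqrt (2 * δ / m) with hh_def
  have hh0 : 0 < h := Real.sqrt_pos.mpr (by positivity)
  have hh2 : h ^ 2 = 2 * δ / m := Real.sq_sqrt (by positivity)
  have hδ_eq : m * h ^ 2 / 2 = δ := by
    rw [hh2]; field_simp
  refine ⟨efF m h, ?_, ?_, ?_, ?_⟩
  · exact fun x => (efF_hasDerivAt m h x).differentiableAt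
  · -- the bound |f| ≤ δ
    have hderiv : ∀ x, deriv (efF m h) x = efG m h x :=
      fun x => (efF_hasDerivAt m h x).deriv
    -- values of efF on [0, 2h]
    have hval1 : ∀ x ∈ Set.Icc (0:ℝ) (2*h), efF m h x = m * (h * x - x^2/2) := by
      intro x hx
      have hcongr : ∀ t ∈ Set.uIcc (0:ℝ) x, efG m h t = m * (h - t) := by
        intro t ht
        rw [Set.uIcc_of_le hx.1] at ht
        have ht' : |t| ≤ 2 * h := by
          rw [abs_of_nonneg ht.1]; linarith [ht.2, hx.2]
        unfold efG
        rw [efD_eq_abs h hh0 ht', abs_of_nonneg ht.1]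
      rw [show efF m h x = ∫ t in (0:ℝ)..x, efG m h t from rfl,
        intervalIntegral.integral_congr hcongr]
      rw [intervalIntegral.integral_const_mul]
      rw [intervalIntegral.integral_sub intervalIntegrable_const
        intervalIntegral.intervalIntegrable_id]
      rw [integral_id, intervalIntegral.integral_const, smul_eq_mul]
      ring
    -- value at 2h
    have hF2h : efF m h (2*h) = 0 := by
      rw [hval1 (2*h) ⟨by positivity, le_refl _⟩]; ring
    -- values of efF on [2h, 4h]
    have hval2 : ∀ x ∈ Set.Icc (2*h) (4*h), efF m h x = m/2 * (x - 2*h) * (x - 4*h) := by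
      intro x hx
      have hsplit : efF m h x = efF m h (2*h) + ∫ t in (2*h)..x, efG m h t := by
        rw [show efF m h (2*h) = ∫ t in (0:ℝ)..(2*h), efG m h t from rfl,
          show efF m h x = ∫ t in (0:ℝ)..x, efG m h t from rfl]
        rw [intervalIntegral.integral_add_adjacent_intervals
          ((efG_continuous m h).intervalIntegrable _ _)
          ((efG_continuous m h).intervalIntegrable _ _)]
      have hcongr : ∀ t ∈ Set.uIcc (2*h) x, efG m h t = m * (t - 3*h) := by
        intro t ht
        rw [Set.uIcc_of_le hx.1] at ht
        have hper : efD h t = efD h (t - 4*h) := by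
          have := efD_periodic h (t - 4*h)
          simpa using this
        have ht' : |t - 4*h| ≤ 2 * h := by
          rw [abs_le]; constructor <;> [linarith [ht.1]; linarith [ht.2, hx.2]]
        have : efD h (t - 4*h) = |t - 4*h| := efD_eq_abs h hh0 ht'
        have habs : |t - 4*h| = 4*h - t := by
          rw [abs_of_nonpos (by linarith [ht.2, hx.2])]; ring
        unfold efG
        rw [hper, this, habs]; ring
      rw [hsplit, hF2h, intervalIntegral.integral_congr hcongr]
      rw [intervalIntegral.integral_const_mul]
      rw [intervalIntegral.integral_sub intervalIntegral.intervalIntegrable_id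
        intervalIntegrable_const]
      rw [integral_id, intervalIntegral.integral_const, smul_eq_mul]
      ring
    -- efF is periodic with period 4h
    have hFper : Function.Periodic (efF m h) (4*h) := by
      intro x
      have hGper : Function.Periodic (efG m h) (4*h) := by
        intro t; unfold efG; rw [efD_periodic h t]
      have h1 : efF m h (x + 4*h) - efF m h x = ∫ t in x..(x + 4*h), efG m h t := by
        rw [show efF m h (x + 4*h) = ∫ t in (0:ℝ)..(x + 4*h), efG m h t from rfl,
          show efF m h x = ∫ t in (0:ℝ)..x, efG m h t from rfl]
        rw [← intervalIntegral.integral_add_adjacent_intervals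
          ((efG_continuous m h).intervalIntegrable 0 x)
          ((efG_continuous m h).intervalIntegrable x (x + 4*h))]
        ring
      have h2 : (∫ t in x..(x + 4*h), efG m h t) = ∫ t in (0:ℝ)..(0 + 4*h), efG m h t :=
        hGper.intervalIntegral_add_eq x 0
      have h3 : (∫ t in (0:ℝ)..(0 + 4*h), efG m h t) = 0 := by
        rw [zero_add]
        rw [← intervalIntegral.integral_add_adjacent_intervals
          ((efG_continuous m h).intervalIntegrable 0 (2*h))
          ((efG_continuous m h).intervalIntegrable (2*h) (4*h))]
        have e1 : (∫ t in (0:ℝ)..(2*h), efG m h t) = efF m h (2*h) := rfl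
        have e2 : (∫ t in (2*h)..(4*h), efG m h t) = efF m h (4*h) - efF m h (2*h) := by
          rw [show efF m h (4*h) = ∫ t in (0:ℝ)..(4*h), efG m h t from rfl,
            show efF m h (2*h) = ∫ t in (0:ℝ)..(2*h), efG m h t from rfl]
          rw [← intervalIntegral.integral_add_adjacent_intervals
            ((efG_continuous m h).intervalIntegrable 0 (2*h))
            ((efG_continuous m h).intervalIntegrable (2*h) (4*h))]
          ring
        have hF4h : efF m h (4*h) = 0 := by
          rw [hval2 (4*h) ⟨by linarith, le_refl _⟩]; ring
        rw [e1, e2, hF2h, hF4h]; ring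
      linarith [h1, h2.trans h3]
    intro x
    obtain ⟨y, hy, hxy⟩ := hFper.exists_mem_Ico₀ (by positivity) x
    rw [hxy]
    rcases le_or_gt y (2*h) with hy2 | hy2
    · rw [hval1 y ⟨hy.1, hy2⟩]
      rw [abs_le]
      constructor
      · nlinarith [mul_nonneg (mul_nonneg hm.le hy.1) (sub_nonneg.mpr hy2), hδ.le]
      · nlinarith [mul_nonneg hm.le (sq_nonneg (y - h)), hδ_eq]
    · rw [hval2 y ⟨le_of_lt hy2, le_of_lt hy.2⟩]
      rw [abs_le]
      constructor
      · nlinarith [mul_nonneg hm.le (sq_nonneg (y - 3*h)), hδ_eq]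
      · nlinarith [mul_nonneg (mul_nonneg hm.le (sub_nonneg.mpr hy2.le)) (sub_nonneg.mpr hy.2.le), hδ.le]
  · -- Lipschitz bound on deriv
    intro s t
    rw [(efF_hasDerivAt m h s).deriv, (efF_hasDerivAt m h t).deriv]
    have heq : efG m h s - efG m h t = m * (efD h t - efD h s) := by
      unfold efG; ring
    rw [heq, abs_mul, abs_of_pos hm]
    have hd := (efD_lipschitz h).dist_le_mul t s
    rw [Real.dist_eq, Real.dist_eq] at hd
    have : |efD h t - efD h s| ≤ |t - s| := by simpa using hd
    have hts : |t - s| = |s - t| := abs_sub_comm _ _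
    nlinarith [abs_nonneg (s - t)]
  · -- value of derivative at 0
    rw [(efF_hasDerivAt m h 0).deriv]
    unfold efG
    rw [efD_zero, sub_zero]
    rw [hh_def, ← Real.sqrt_sq hm.le, ← Real.sqrt_mul (by positivity)]
    congr 1
    field_simp
    rw [Real.sq_sqrt (by positivity)]
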